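/- Unique difference representation for the sets Hₙ = {0} ∪ {j·5^{n(n+1)/2} : 1 ≤ j ≤ ⌈√n⌉} ∪ {5^{n(n+1)/2 + m} : ⌈√n⌉ ≤ m ≤ n}: if ∑_{i=0}^{N−1}(dᵢ − dᵢ') = ∑_{i=0}^{N−1}(eᵢ − eᵢ') with dᵢ, dᵢ', eᵢ, eᵢ' ∈ Hᵢ, then dᵢ − dᵢ' = eᵢ − eᵢ' for every i. -/

import Mathlib

/-- The sets `Hₙ = {0} ∪ {j·5^{n(n+1)/2} : 1 ≤ j ≤ ⌈√n⌉} ∪ {5^{n(n+1)/2+m} : ⌈√n⌉ ≤ m ≤ n}`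
from the multiply-recurrent zero-type construction. -/
noncomputable def Hset (n : ℕ) : Finset ℤ :=
  {0} ∪ (Finset.Icc 1 ⌈Real.sqrt n⌉₊).image (fun j : ℕ => (j : ℤ) * 5 ^ (n * (n + 1) / 2))
    ∪ (Finset.Icc ⌈Real.sqrt n⌉₊ n).image (fun m => (5 : ℤ) ^ (n * (n + 1) / 2 + m))

lemma aux14_ceil_sqrt_le (n : ℕ) : ⌈Real.sqrt n⌉₊ ≤ n := by
  apply Nat.ceil_le.mpr
  have h0 : (0 : ℝ) ≤ (n : ℝ) := Nat.cast_nonneg n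
  have h1 : Real.sqrt n ≤ Real.sqrt ((n : ℝ) ^ 2) := by
    apply Real.sqrt_le_sqrt
    have : (0:ℝ) ≤ (n:ℝ) * ((n:ℝ) - 1) := by
      rcases Nat.eq_zero_or_pos n with h | h
      · simp [h]
      · have : (1:ℝ) ≤ (n:ℝ) := by exact_mod_cast h
        nlinarith
    nlinarith
  rwa [Real.sqrt_sq h0] at h1

lemma aux14_mem (n : ℕ) {x : ℤ} (hx : x ∈ Hset n) :
    0 ≤ x ∧ x ≤ 5 ^ (n * (n + 1) / 2 + n) ∧ (5:ℤ) ^ (n * (n + 1) / 2) ∣ x := by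
  simp only [Hset, Finset.mem_union, Finset.mem_singleton, Finset.mem_image,
    Finset.mem_Icc] at hx
  rcases hx with (rfl | ⟨j, ⟨hj1, hj2⟩, rfl⟩) | ⟨m, ⟨hm1, hm2⟩, rfl⟩
  · exact ⟨le_refl 0, by positivity, dvd_zero _⟩
  · have hjn : j ≤ n := hj2.trans (aux14_ceil_sqrt_le n)
    have hj5 : (j : ℤ) ≤ 5 ^ n := by
      have : j < 5 ^ n := lt_of_le_of_lt hjn (Nat.lt_pow_self (by norm_num : 1 < 5))
      exact_mod_cast this.le
    refine ⟨by positivity, ?_, Dvd.intro_left _ rfl⟩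
    calc (j : ℤ) * 5 ^ (n * (n + 1) / 2) ≤ 5 ^ n * 5 ^ (n * (n + 1) / 2) := by
          apply mul_le_mul_of_nonneg_right hj5 (by positivity)
      _ = 5 ^ (n * (n + 1) / 2 + n) := by rw [← pow_add, Nat.add_comm]
  · refine ⟨by positivity, ?_, pow_dvd_pow _ (Nat.le_add_right _ _)⟩
    exact pow_le_pow_right₀ (by norm_num) (by omega)

lemma aux14_tsucc (n : ℕ) : (n + 1) * (n + 1 + 1) / 2 = n * (n + 1) / 2 + (n + 1) := by
  have h : (n + 1) * (n + 1 + 1) = n * (n + 1) + 2 * (n + 1) := by ring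
  rw [h, Nat.add_mul_div_left _ _ (by norm_num : 0 < 2)]

lemma aux14_sumb (N : ℕ) :
    (∑ i ∈ Finset.range N, 2 * (5:ℤ) ^ (i * (i + 1) / 2 + i)) < 5 ^ (N * (N + 1) / 2) := by
  induction N with
  | zero => norm_num
  | succ N ih =>
    rw [Finset.sum_range_succ, aux14_tsucc N,
      show N * (N + 1) / 2 + (N + 1) = (N * (N + 1) / 2 + N) + 1 from by omega, pow_succ]
    have hp : (0:ℤ) < 5 ^ (N * (N + 1) / 2 + N) := by positivity
    have h1 : (5:ℤ) ^ (N * (N + 1) / 2) ≤ 5 ^ (N * (N + 1) / 2 + N) :=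
      pow_le_pow_right₀ (by norm_num) (Nat.le_add_right _ _)
    linarith

lemma aux14_main (N : ℕ) (f : ℕ → ℤ)
    (hdvd : ∀ i, i < N → (5:ℤ) ^ (i * (i + 1) / 2) ∣ f i)
    (hbd : ∀ i, i < N → |f i| ≤ 2 * 5 ^ (i * (i + 1) / 2 + i))
    (hsum : ∑ i ∈ Finset.range N, f i = 0) : ∀ i, i < N → f i = 0 := by
  induction N with
  | zero => intro i hi; omega
  | succ N ih =>
    have hfN : f N = 0 := by
      have h1 : f N = -∑ i ∈ Finset.range N, f i := by
        rw [Finset.sum_range_succ] at hsum; linarith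
      have h2 : |∑ i ∈ Finset.range N, f i| ≤
          ∑ i ∈ Finset.range N, 2 * (5:ℤ) ^ (i * (i + 1) / 2 + i) :=
        (Finset.abs_sum_le_sum_abs _ _).trans
          (Finset.sum_le_sum fun i hi => hbd i (by simp at hi; omega))
      have h3 : |f N| < 5 ^ (N * (N + 1) / 2) := by
        rw [h1, abs_neg]; exact lt_of_le_of_lt h2 (aux14_sumb N)
      exact Int.eq_zero_of_abs_lt_dvd (hdvd N (Nat.lt_succ_self N)) h3
    intro i hi
    rcases Nat.lt_succ_iff_lt_or_eq.mp hi with h | rfl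
    · refine ih (fun i hi => hdvd i (by omega)) (fun i hi => hbd i (by omega)) ?_ i h
      rw [Finset.sum_range_succ, hfN, add_zero] at hsum; exact hsum
    · exact hfN

/-- Unique difference representation for the sets `Hₙ`. -/
theorem stmt_14 (N : ℕ) (d d' e e' : ℕ → ℤ)
    (hd : ∀ i, i < N → d i ∈ Hset i) (hd' : ∀ i, i < N → d' i ∈ Hset i)
    (he : ∀ i, i < N → e i ∈ Hset i) (he' : ∀ i, i < N → e' i ∈ Hset i)
    (hsum : ∑ i ∈ Finset.range N, (d i - d' i) = ∑ i ∈ Finset.range N, (e i - e' i)) :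
    ∀ i, i < N → d i - d' i = e i - e' i := by
  set f : ℕ → ℤ := fun i => (d i - d' i) - (e i - e' i) with hf
  have key : ∀ i, i < N → f i = 0 := by
    apply aux14_main
    · intro i hi
      obtain ⟨_, _, h1⟩ := aux14_mem i (hd i hi)
      obtain ⟨_, _, h2⟩ := aux14_mem i (hd' i hi)
      obtain ⟨_, _, h3⟩ := aux14_mem i (he i hi)
      obtain ⟨_, _, h4⟩ := aux14_mem i (he' i hi)
      exact dvd_sub (dvd_sub h1 h2) (dvd_sub h3 h4)
    · intro i hi
      obtain ⟨a1, b1, _⟩ := aux14_mem i (hd i hi)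
      obtain ⟨a2, b2, _⟩ := aux14_mem i (hd' i hi)
      obtain ⟨a3, b3, _⟩ := aux14_mem i (he i hi)
      obtain ⟨a4, b4, _⟩ := aux14_mem i (he' i hi)
      rw [abs_le]; constructor <;> simp only [hf] <;> linarith
    · simp only [hf, Finset.sum_sub_distrib, hsum, sub_self]
  intro i hi
  have := key i hi
  simp only [hf] at this
  linarith
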